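/- Let γ > 0, m > 0, and c, b, a ∈ R with c = ‖k* - k₀‖² ≥ 0. Define F_u(σ) = -(β(σ)²/2)(c + σ²m) + β(σ)c + (k₀ᵀk* - k₀ᵀk₀/2), where β(σ) = γ²/(γ²+σ²). Then F_u'(σ) = (σγ²/(γ²+σ²)³)·[(mγ² - 2c)σ² - mγ⁴]. Consequently, if γ² ≤ 2c/m, F_u is strictly decreasing on (0,∞); if γ² > 2c/m, F_u attains a global minimum at σ_min = γ·sqrt(mγ²/(mγ² - 2c)), decreasing on (0, σ_min) and increasing on (σ_min, ∞). -/

import Mathlib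

open Matrix

/-- Utility disparity for Bayesian agents with common prior: with
`c = ‖k* - k₀‖²`, `β(σ) = γ²/(γ²+σ²)`, `m > 0` and
`F_u(σ) = -(β(σ)²/2)(c + σ²m) + β(σ)c + (k₀ᵀk* - k₀ᵀk₀/2)`, the derivative is
`F_u'(σ) = (σγ²/(γ²+σ²)³)·[(mγ² - 2c)σ² - mγ⁴]`. Consequently, if `γ² ≤ 2c/m` then `F_u`
is strictly decreasing on `(0,∞)`; if `γ² > 2c/m` then `F_u` attains a global minimum at
`σ_min = γ·√(mγ²/(mγ² - 2c))`, being strictly decreasing on `(0, σ_min)` and strictly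
increasing on `(σ_min, ∞)`. -/
theorem bayesian_utility_disparity_shape {d : ℕ} (k₀ ks : Fin d → ℝ)
    (γ m : ℝ) (hγ : 0 < γ) (hm : 0 < m) :
    let c : ℝ := (ks - k₀) ⬝ᵥ (ks - k₀)
    let β : ℝ → ℝ := fun σ => γ ^ 2 / (γ ^ 2 + σ ^ 2)
    let Fu : ℝ → ℝ := fun σ =>
      -(β σ ^ 2 / 2) * (c + σ ^ 2 * m) + β σ * c + (k₀ ⬝ᵥ ks - k₀ ⬝ᵥ k₀ / 2)
    let σmin : ℝ := γ * Real.sqrt (m * γ ^ 2 / (m * γ ^ 2 - 2 * c))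
    (∀ σ : ℝ, HasDerivAt Fu
      (σ * γ ^ 2 / (γ ^ 2 + σ ^ 2) ^ 3 * ((m * γ ^ 2 - 2 * c) * σ ^ 2 - m * γ ^ 4)) σ) ∧
    (γ ^ 2 ≤ 2 * c / m → StrictAntiOn Fu (Set.Ioi 0)) ∧
    (γ ^ 2 > 2 * c / m →
      (∀ σ : ℝ, Fu σmin ≤ Fu σ) ∧
      StrictAntiOn Fu (Set.Ioo 0 σmin) ∧
      StrictMonoOn Fu (Set.Ioi σmin)) := by
  intro c β Fu σmin
  have hc : 0 ≤ c := Finset.sum_nonneg fun i _ => mul_self_nonneg _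
  have key : ∀ σ : ℝ, HasDerivAt Fu
      (σ * γ ^ 2 / (γ ^ 2 + σ ^ 2) ^ 3 * ((m * γ ^ 2 - 2 * c) * σ ^ 2 - m * γ ^ 4)) σ := by
    intro σ
    have hD : γ ^ 2 + σ ^ 2 ≠ 0 := by positivity
    have h1 : HasDerivAt (fun x : ℝ => γ ^ 2 + x ^ 2) (2 * σ) σ := by
      simpa using (hasDerivAt_pow 2 σ).const_add (γ ^ 2)
    have hβ : HasDerivAt β ((0 * (γ ^ 2 + σ ^ 2) - γ ^ 2 * (2 * σ)) / (γ ^ 2 + σ ^ 2) ^ 2) σ :=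
      (hasDerivAt_const σ (γ ^ 2)).div h1 hD
    have h2 : HasDerivAt (fun x : ℝ => c + x ^ 2 * m) (2 * σ * m) σ := by
      simpa using ((hasDerivAt_pow 2 σ).mul_const m).const_add c
    have h3 := ((((hβ.pow 2).div_const 2).neg.mul h2).add (hβ.mul_const c)).add_const
      (k₀ ⬝ᵥ ks - k₀ ⬝ᵥ k₀ / 2)
    have h3' : HasDerivAt Fu _ σ := h3
    refine h3'.congr_deriv ?_
    simp only [β, Pi.neg_apply, Pi.pow_apply]
    norm_num
    field_simp
    ring
  have hderiv : ∀ x : ℝ, deriv Fu x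
      = x * γ ^ 2 / (γ ^ 2 + x ^ 2) ^ 3 * ((m * γ ^ 2 - 2 * c) * x ^ 2 - m * γ ^ 4) :=
    fun x => (key x).deriv
  have hcont : Continuous Fu := by
    rw [continuous_iff_continuousAt]; exact fun x => (key x).differentiableAt.continuousAt
  refine ⟨key, ?_, ?_⟩
  · intro h
    have hp : m * γ ^ 2 - 2 * c ≤ 0 := by
      have := (le_div_iff₀ hm).mp h; linarith
    apply strictAntiOn_of_deriv_neg (convex_Ioi 0) hcont.continuousOn
    intro x hx
    rw [interior_Ioi] at hx
    have hx0 : (0:ℝ) < x := hx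
    rw [hderiv]
    have h1 : 0 < x * γ ^ 2 / (γ ^ 2 + x ^ 2) ^ 3 := by positivity
    have h4 : 0 < m * γ ^ 4 := by positivity
    have h2 : (m * γ ^ 2 - 2 * c) * x ^ 2 - m * γ ^ 4 < 0 := by nlinarith [sq_nonneg x]
    exact mul_neg_of_pos_of_neg h1 h2
  · intro h
    have hp : 0 < m * γ ^ 2 - 2 * c := by
      have := (div_lt_iff₀ hm).mp h; linarith
    have harg : 0 < m * γ ^ 2 / (m * γ ^ 2 - 2 * c) := div_pos (by positivity) hp
    have hσmin : 0 < σmin := mul_pos hγ (Real.sqrt_pos.mpr harg)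
    have hs2 : σmin ^ 2 = m * γ ^ 4 / (m * γ ^ 2 - 2 * c) := by
      show (γ * Real.sqrt (m * γ ^ 2 / (m * γ ^ 2 - 2 * c))) ^ 2 = _
      rw [mul_pow, Real.sq_sqrt harg.le]
      field_simp
    have hbr : (m * γ ^ 2 - 2 * c) * σmin ^ 2 = m * γ ^ 4 := by
      rw [hs2]; field_simp
    refine ⟨?_, ?_, ?_⟩
    · intro σ
      rw [← sub_nonneg]
      have hpc : 0 ≤ m * γ ^ 2 - c := by linarith
      have key2 : Fu σ - Fu σmin
          = γ ^ 2 * γ ^ 2 * (m * γ ^ 2 - c) * ((m * γ ^ 2 - 2 * c) * σ ^ 2 - m * γ ^ 4) ^ 2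
            / (2 * (m * γ ^ 2 - 2 * c) ^ 2 * (γ ^ 2 + σ ^ 2) ^ 2 * (γ ^ 2 + σmin ^ 2) ^ 2) := by
        show -(β σ ^ 2 / 2) * (c + σ ^ 2 * m) + β σ * c + (k₀ ⬝ᵥ ks - k₀ ⬝ᵥ k₀ / 2)
          - (-(β σmin ^ 2 / 2) * (c + σmin ^ 2 * m) + β σmin * c + (k₀ ⬝ᵥ ks - k₀ ⬝ᵥ k₀ / 2)) = _
        simp only [β]
        rw [hs2]
        have h1 : γ ^ 2 + σ ^ 2 ≠ 0 := by positivity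
        have h2 : γ ^ 2 + m * γ ^ 4 / (m * γ ^ 2 - 2 * c) ≠ 0 := by
          have : 0 < m * γ ^ 4 / (m * γ ^ 2 - 2 * c) := div_pos (by positivity) hp
          positivity
        have hpne : m * γ ^ 2 - 2 * c ≠ 0 := hp.ne'
        have hqne : m * γ ^ 2 - c ≠ 0 := by
          intro hq; nlinarith
        have e : γ ^ 2 + m * γ ^ 4 / (m * γ ^ 2 - 2 * c)
            = γ ^ 2 * (2 * (m * γ ^ 2 - c)) / (m * γ ^ 2 - 2 * c) := by
          rw [eq_div_iff hpne, add_mul, div_mul_cancel₀ _ hpne]; ring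
        rw [e]
        have hγ0 : γ ≠ 0 := hγ.ne'
        generalize k₀ ⬝ᵥ ks - k₀ ⬝ᵥ k₀ / 2 = K
        clear_value c
        clear h2 hs2 hbr h harg hpc hσmin key hderiv hcont σmin Fu
        generalize hP : m * γ ^ 2 - 2 * c = P at *
        have hc' : c = (m * γ ^ 2 - P) / 2 := by linarith
        subst hc'
        have hQ : m * γ ^ 2 + P ≠ 0 := by
          intro h; apply hqne; linarith
        have hR : γ ^ 2 * 2 * m - (γ ^ 2 * m - P) ≠ 0 := by intro h; apply hQ; linarith
        field_simp
        ring
      rw [key2]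
      apply div_nonneg
      · exact mul_nonneg (mul_nonneg (by positivity) hpc) (sq_nonneg _)
      · positivity
    · apply strictAntiOn_of_deriv_neg (convex_Ioo 0 σmin) hcont.continuousOn
      intro x hx
      rw [interior_Ioo] at hx
      have hx0 : 0 < x := hx.1
      have hx2 : x ^ 2 < σmin ^ 2 := by nlinarith [hx.2]
      rw [hderiv]
      have h1 : 0 < x * γ ^ 2 / (γ ^ 2 + x ^ 2) ^ 3 := by positivity
      have h2 : (m * γ ^ 2 - 2 * c) * x ^ 2 - m * γ ^ 4 < 0 := by nlinarith
      exact mul_neg_of_pos_of_neg h1 h2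
    · apply strictMonoOn_of_deriv_pos (convex_Ioi σmin) hcont.continuousOn
      intro x hx
      rw [interior_Ioi] at hx
      have hx0 : 0 < x := lt_trans hσmin hx
      have hx2 : σmin ^ 2 < x ^ 2 := by nlinarith [Set.mem_Ioi.mp hx]
      rw [hderiv]
      have h1 : 0 < x * γ ^ 2 / (γ ^ 2 + x ^ 2) ^ 3 := by positivity
      have h2 : 0 < (m * γ ^ 2 - 2 * c) * x ^ 2 - m * γ ^ 4 := by nlinarith
      exact mul_pos h1 h2
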